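/- arXiv:1807.10863 — 6 statements merged into one kernel-verified Lean document; each statement's English description precedes it below -/
import Mathlib

section
/- Let n ≥ 1, let K be a subgroup of U(n), and let 𝔨 be a real subspace of the skew-Hermitian n×n complex matrices such that k·B·k⁻¹ ∈ 𝔨 for all k ∈ K and B ∈ 𝔨. Assume the moment map is injective on K-orbits, i.e. for all z, w ∈ ℂⁿ: if there exists k ∈ K such that Im⟨w, B w⟩ = Im⟨z, (k⁻¹ B k) z⟩ for all B ∈ 𝔨, then w = k′ z for some k′ ∈ K. Let U ∈ 𝔨 satisfy k·U·k⁻¹ = U for all k ∈ K, and let x be a nonzero real number. Then for every X ∈ 𝔨, the set F_X := { z ∈ ℂⁿ : ∃ k ∈ K such that tr(U B) + (x/2)·Im⟨z, B z⟩ = tr(X · k⁻¹ B k) for all B ∈ 𝔨 } is either empty or a single K-orbit; that is, any two elements z, w ∈ F_X satisfy w = k z for some k ∈ K. (This is Theorem 1: together with Proposition 1 it yields n(O^G_{(U,0,x)}, O^K_X) ≤ 1 for every K-coadjoint orbit O^K_X; the moment-map injectivity hypothesis is the property of Gelfand pairs (K, H_n) used in the proof.) -/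
open Matrix Complex Finset

/-- Theorem 1: if the moment map for the action of a closed subgroup
`K ≤ U(n)` on `ℂⁿ` is injective on `K`-orbits (the property of Gelfand pairs
`(K, H_n)` used in the proof), `U ∈ 𝔨` is central and `x ≠ 0`, then for every
`X ∈ 𝔨` the set `F_X` is either empty or a single `K`-orbit. -/
theorem corwinGreenleaf_le_one_of_central {n : ℕ} (hn : 1 ≤ n)
    (K : Subgroup (Matrix.unitaryGroup (Fin n) ℂ))
    (𝔨 : Submodule ℝ (Matrix (Fin n) (Fin n) ℂ))
    (hskew : ∀ B ∈ 𝔨, Bᴴ = -B)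
    (hAd : ∀ k ∈ K, ∀ B ∈ 𝔨,
      (k : Matrix (Fin n) (Fin n) ℂ) * B * star (k : Matrix (Fin n) (Fin n) ℂ) ∈ 𝔨)
    (hmoment : ∀ z w : Fin n → ℂ,
      (∃ k ∈ K, ∀ B ∈ 𝔨,
        (∑ j, w j * (starRingEnd ℂ) (B.mulVec w j)).im
          = (∑ j, z j * (starRingEnd ℂ)
              (((star (k : Matrix (Fin n) (Fin n) ℂ) * B *
                  (k : Matrix (Fin n) (Fin n) ℂ)).mulVec z) j)).im) →
      ∃ k' ∈ K, w = (k' : Matrix (Fin n) (Fin n) ℂ).mulVec z)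
    (U : Matrix (Fin n) (Fin n) ℂ) (hU : U ∈ 𝔨)
    (hUcent : ∀ k ∈ K,
      (k : Matrix (Fin n) (Fin n) ℂ) * U * star (k : Matrix (Fin n) (Fin n) ℂ) = U)
    (x : ℝ) (hx : x ≠ 0)
    (X : Matrix (Fin n) (Fin n) ℂ) (hX : X ∈ 𝔨) :
    ∀ z ∈ {z : Fin n → ℂ | ∃ k ∈ K, ∀ B ∈ 𝔨,
        Matrix.trace (U * B)
          + ((((x / 2) * (∑ j, z j * (starRingEnd ℂ) (B.mulVec z j)).im : ℝ)) : ℂ)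
          = Matrix.trace (X * (star (k : Matrix (Fin n) (Fin n) ℂ) * B *
              (k : Matrix (Fin n) (Fin n) ℂ)))},
      ∀ w ∈ {z : Fin n → ℂ | ∃ k ∈ K, ∀ B ∈ 𝔨,
        Matrix.trace (U * B)
          + ((((x / 2) * (∑ j, z j * (starRingEnd ℂ) (B.mulVec z j)).im : ℝ)) : ℂ)
          = Matrix.trace (X * (star (k : Matrix (Fin n) (Fin n) ℂ) * B *
              (k : Matrix (Fin n) (Fin n) ℂ)))},
      ∃ k ∈ K, w = (k : Matrix (Fin n) (Fin n) ℂ).mulVec z := by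
  rintro z ⟨k₁, hk₁, hz⟩ w ⟨k₂, hk₂, hw⟩
  set A₁ : Matrix (Fin n) (Fin n) ℂ := ((k₁ : Matrix.unitaryGroup (Fin n) ℂ) : Matrix (Fin n) (Fin n) ℂ) with hA₁
  set A₂ : Matrix (Fin n) (Fin n) ℂ := ((k₂ : Matrix.unitaryGroup (Fin n) ℂ) : Matrix (Fin n) (Fin n) ℂ) with hA₂
  have h₁ : star A₁ * A₁ = 1 := (k₁ : Matrix.unitaryGroup (Fin n) ℂ).2.1
  have h₁' : A₁ * star A₁ = 1 := (k₁ : Matrix.unitaryGroup (Fin n) ℂ).2.2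
  have h₂ : star A₂ * A₂ = 1 := (k₂ : Matrix.unitaryGroup (Fin n) ℂ).2.1
  have h₂' : A₂ * star A₂ = 1 := (k₂ : Matrix.unitaryGroup (Fin n) ℂ).2.2
  apply hmoment z w
  refine ⟨k₂ * k₁⁻¹, mul_mem hk₂ (inv_mem hk₁), ?_⟩
  intro B hB
  have hcoe : ((↑(k₂ * k₁⁻¹) : Matrix.unitaryGroup (Fin n) ℂ) : Matrix (Fin n) (Fin n) ℂ)
      = A₂ * star A₁ := rfl
  rw [hcoe]
  -- D := star A₂ * B * A₂ ∈ 𝔨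
  have hD : star A₂ * B * A₂ ∈ 𝔨 := by
    have := hAd k₂⁻¹ (inv_mem hk₂) B hB
    simpa using this
  -- C := A₁ * (star A₂ * B * A₂) * star A₁ ∈ 𝔨
  have hC : A₁ * (star A₂ * B * A₂) * star A₁ ∈ 𝔨 := hAd k₁ hk₁ _ hD
  set C : Matrix (Fin n) (Fin n) ℂ := A₁ * (star A₂ * B * A₂) * star A₁ with hCdef
  -- key matrix identity
  have hkey : star (A₂ * star A₁) * B * (A₂ * star A₁) = C := by
    rw [hCdef, StarMul.star_mul, star_star]
    noncomm_ring
  rw [hkey]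
  -- star A₁ * C * A₁ = star A₂ * B * A₂
  have hCA : star A₁ * C * A₁ = star A₂ * B * A₂ := by
    rw [hCdef]
    calc star A₁ * (A₁ * (star A₂ * B * A₂) * star A₁) * A₁
        = (star A₁ * A₁) * (star A₂ * B * A₂) * (star A₁ * A₁) := by noncomm_ring
      _ = star A₂ * B * A₂ := by rw [h₁]; simp
  -- traces of U against C and B agree
  have hUA₁ : star A₁ * U * A₁ = U := by
    have := hUcent k₁⁻¹ (inv_mem hk₁)
    simpa using this
  have hUA₂ : A₂ * U * star A₂ = U := hUcent k₂ hk₂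
  have htrC : Matrix.trace (U * C) = Matrix.trace (U * B) := by
    have c1 : U * C = (U * A₁ * (star A₂ * B * A₂)) * star A₁ := by
      rw [hCdef]; noncomm_ring
    have c2 : star A₁ * (U * A₁ * (star A₂ * B * A₂))
        = U * (star A₂ * B * A₂) := by
      have h : star A₁ * (U * A₁ * (star A₂ * B * A₂))
          = (star A₁ * U * A₁) * (star A₂ * B * A₂) := by noncomm_ring
      rw [h, hUA₁]
    have c3 : U * (star A₂ * B * A₂) = (U * star A₂ * B) * A₂ := by noncomm_ring
    have c4 : A₂ * (U * star A₂ * B) = (A₂ * U * star A₂) * B := by noncomm_ring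
    rw [c1, Matrix.trace_mul_comm, c2, c3, Matrix.trace_mul_comm, c4, hUA₂]
  -- combine the two defining equations
  have e1 := hz C hC
  have e2 := hw B hB
  rw [hCA] at e1
  have e3 : Matrix.trace (X * (star A₂ * B * A₂)) = Matrix.trace (X * (star A₂ * B * A₂)) := rfl
  have e4 : Matrix.trace (U * C)
      + ((((x / 2) * (∑ j, z j * (starRingEnd ℂ) (C.mulVec z j)).im : ℝ)) : ℂ)
      = Matrix.trace (U * B)
      + ((((x / 2) * (∑ j, w j * (starRingEnd ℂ) (B.mulVec w j)).im : ℝ)) : ℂ) := by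
    rw [e1, e2]
  rw [htrC] at e4
  have e5 : ((((x / 2) * (∑ j, z j * (starRingEnd ℂ) (C.mulVec z j)).im : ℝ)) : ℂ)
      = ((((x / 2) * (∑ j, w j * (starRingEnd ℂ) (B.mulVec w j)).im : ℝ)) : ℂ) :=
    add_left_cancel e4
  have e6 : (x / 2) * (∑ j, z j * (starRingEnd ℂ) (C.mulVec z j)).im
      = (x / 2) * (∑ j, w j * (starRingEnd ℂ) (B.mulVec w j)).im :=
    Complex.ofReal_inj.mp e5
  have hx2 : (x / 2 : ℝ) ≠ 0 := div_ne_zero hx two_ne_zero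
  exact (mul_left_cancel₀ hx2 e6).symm
end

section
/- Let n ≥ 1, let U and X be skew-Hermitian n×n complex matrices, and let x be a nonzero real number. Set H := { k ∈ U(n) : k U k* = U } (the stabilizer of U in U(n)) and F_X := { z ∈ ℂⁿ : ∃ A ∈ U(n), U + (i x/2)·zz* = A X A* }. Then there is a bijection between the set of U(n)-orbits of O^G_{(U,x)} ∩ pr⁻¹(O^K_X) (for the action k·(M,v) = (k M k*, k v)) and the set of H-orbits of F_X (for the action h·z = h z). In particular, the Corwin–Greenleaf multiplicity n(O^G_{(U,0,x)}, O^K_X) equals the number of H-orbits in F_X. (Proposition 1 for K = U(n).) -/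
open Matrix Complex Finset

/-- The outer matrix `z w*` with `(l,j)` entry `z l * conj (w j)`. -/
noncomputable def outerMat {n : ℕ} (z w : Fin n → ℂ) : Matrix (Fin n) (Fin n) ℂ :=
  Matrix.of fun l j => z l * (starRingEnd ℂ) (w j)

/-- The generic coadjoint orbit `O^G_{(U,x)}` of the Heisenberg motion group,
realized in `M_n(ℂ) × ℂⁿ`. -/
noncomputable def genOrbit {n : ℕ} (U : Matrix (Fin n) (Fin n) ℂ) (x : ℝ) :
    Set (Matrix (Fin n) (Fin n) ℂ × (Fin n → ℂ)) :=
  {p | ∃ k : Matrix.unitaryGroup (Fin n) ℂ, ∃ z : Fin n → ℂ,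
    p = ((k : Matrix (Fin n) (Fin n) ℂ) *
          (U + ((Complex.I * (x : ℂ)) / 2) • outerMat z z) *
          star (k : Matrix (Fin n) (Fin n) ℂ),
        (x : ℂ) • (k : Matrix (Fin n) (Fin n) ℂ).mulVec z)}

/-- `pr⁻¹(O^K_X)` realized in `M_n(ℂ) × ℂⁿ`. -/
noncomputable def prInv {n : ℕ} (X : Matrix (Fin n) (Fin n) ℂ) :
    Set (Matrix (Fin n) (Fin n) ℂ × (Fin n → ℂ)) :=
  {p | ∃ A : Matrix.unitaryGroup (Fin n) ℂ,
    p.1 = (A : Matrix (Fin n) (Fin n) ℂ) * X * star (A : Matrix (Fin n) (Fin n) ℂ)}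

namespace CGaux

variable {n : ℕ}

lemma outer_mulVec (A : Matrix (Fin n) (Fin n) ℂ) (z : Fin n → ℂ) :
    outerMat (A.mulVec z) (A.mulVec z) = A * outerMat z z * star A := by
  ext l j
  simp only [outerMat, Matrix.mul_apply, Matrix.mulVec, dotProduct, Matrix.of_apply,
    Matrix.star_apply, Matrix.conjTranspose_apply, map_sum, _root_.map_mul, Finset.sum_mul,
    Finset.mul_sum]
  exact Finset.sum_congr rfl fun r _ => Finset.sum_congr rfl fun m _ => by
    simp only [Complex.star_def]; ring

/-- The `U(n)` action on `M_n(ℂ) × ℂⁿ`. -/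
noncomputable def act (k : Matrix.unitaryGroup (Fin n) ℂ)
    (p : Matrix (Fin n) (Fin n) ℂ × (Fin n → ℂ)) :
    Matrix (Fin n) (Fin n) ℂ × (Fin n → ℂ) :=
  ((k : Matrix (Fin n) (Fin n) ℂ) * p.1 * star (k : Matrix (Fin n) (Fin n) ℂ),
   (k : Matrix (Fin n) (Fin n) ℂ).mulVec p.2)

lemma coe_inv (k : Matrix.unitaryGroup (Fin n) ℂ) :
    ((k⁻¹ : Matrix.unitaryGroup (Fin n) ℂ) : Matrix (Fin n) (Fin n) ℂ)
      = star (k : Matrix (Fin n) (Fin n) ℂ) := by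
  rw [← Unitary.star_eq_inv, Unitary.coe_star]

lemma conj_mul_conj (a b M : Matrix (Fin n) (Fin n) ℂ) :
    (a * b) * M * star (a * b) = a * (b * M * star b) * star a := by
  rw [StarMul.star_mul]; noncomm_ring

lemma act_mul (k m : Matrix.unitaryGroup (Fin n) ℂ)
    (p : Matrix (Fin n) (Fin n) ℂ × (Fin n → ℂ)) :
    act (k * m) p = act k (act m p) := by
  simp [act, Matrix.mulVec_mulVec, StarMul.star_mul, mul_assoc]

lemma act_one (p : Matrix (Fin n) (Fin n) ℂ × (Fin n → ℂ)) : act 1 p = p := by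
  simp [act]

lemma act_inv (k : Matrix.unitaryGroup (Fin n) ℂ)
    (p : Matrix (Fin n) (Fin n) ℂ × (Fin n → ℂ)) : act k⁻¹ (act k p) = p := by
  rw [← act_mul, inv_mul_cancel, act_one]

/-- The `U(n)`-orbit of a point of `M_n(ℂ) × ℂⁿ`. -/
noncomputable def Orb1 (p : Matrix (Fin n) (Fin n) ℂ × (Fin n → ℂ)) :
    Set (Matrix (Fin n) (Fin n) ℂ × (Fin n → ℂ)) :=
  {q | ∃ k : Matrix.unitaryGroup (Fin n) ℂ, q = act k p}

lemma mem_Orb1_self (p : Matrix (Fin n) (Fin n) ℂ × (Fin n → ℂ)) : p ∈ Orb1 p :=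
  ⟨1, (act_one p).symm⟩

lemma Orb1_eq_of_mem {p q : Matrix (Fin n) (Fin n) ℂ × (Fin n → ℂ)} (h : q ∈ Orb1 p) :
    Orb1 q = Orb1 p := by
  obtain ⟨k, rfl⟩ := h
  ext r
  constructor
  · rintro ⟨m, rfl⟩; exact ⟨m * k, (act_mul m k p).symm⟩
  · rintro ⟨m, rfl⟩; exact ⟨m * k⁻¹, by rw [act_mul, act_inv]⟩

/-- The `H`-orbit of `z ∈ ℂⁿ`, where `H` is the stabilizer of `U`. -/
noncomputable def Orb2 (U : Matrix (Fin n) (Fin n) ℂ) (z : Fin n → ℂ) : Set (Fin n → ℂ) :=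
  {w | ∃ h : Matrix.unitaryGroup (Fin n) ℂ,
    (h : Matrix (Fin n) (Fin n) ℂ) * U * star (h : Matrix (Fin n) (Fin n) ℂ) = U ∧
    w = (h : Matrix (Fin n) (Fin n) ℂ).mulVec z}

lemma mem_Orb2_self (U : Matrix (Fin n) (Fin n) ℂ) (z : Fin n → ℂ) : z ∈ Orb2 U z :=
  ⟨1, by simp⟩

lemma stab_inv {U : Matrix (Fin n) (Fin n) ℂ} {k : Matrix.unitaryGroup (Fin n) ℂ}
    (h : (k : Matrix (Fin n) (Fin n) ℂ) * U * star (k : Matrix (Fin n) (Fin n) ℂ) = U) :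
    ((k⁻¹ : Matrix.unitaryGroup (Fin n) ℂ) : Matrix (Fin n) (Fin n) ℂ) * U *
      star ((k⁻¹ : Matrix.unitaryGroup (Fin n) ℂ) : Matrix (Fin n) (Fin n) ℂ) = U := by
  rw [coe_inv, star_star]
  conv_lhs => rw [← h]
  calc star (k : Matrix (Fin n) (Fin n) ℂ) *
        ((k : Matrix (Fin n) (Fin n) ℂ) * U * star (k : Matrix (Fin n) (Fin n) ℂ)) *
        (k : Matrix (Fin n) (Fin n) ℂ)
      = (star (k : Matrix (Fin n) (Fin n) ℂ) * (k : Matrix (Fin n) (Fin n) ℂ)) * U *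
        (star (k : Matrix (Fin n) (Fin n) ℂ) * (k : Matrix (Fin n) (Fin n) ℂ)) := by
        noncomm_ring
    _ = U := by rw [Unitary.coe_star_mul_self]; simp

lemma Orb2_eq_of_mem {U : Matrix (Fin n) (Fin n) ℂ} {z w : Fin n → ℂ}
    (h : w ∈ Orb2 U z) : Orb2 U w = Orb2 U z := by
  obtain ⟨k, hk, rfl⟩ := h
  ext r
  constructor
  · rintro ⟨m, hm, rfl⟩
    refine ⟨m * k, ?_, ?_⟩
    · push_cast [Submonoid.coe_mul]
      rw [conj_mul_conj, hk, hm]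
    · simp [Matrix.mulVec_mulVec]
  · rintro ⟨m, hm, rfl⟩
    refine ⟨m * k⁻¹, ?_, ?_⟩
    · have hki := stab_inv hk
      push_cast [Submonoid.coe_mul]
      rw [conj_mul_conj, hki, hm]
    · rw [Submonoid.coe_mul, coe_inv]
      simp [Matrix.mulVec_mulVec, mul_assoc, Unitary.coe_star_mul_self]

/-- The base point of `O^G_{(U,x)}` attached to `z`. -/
noncomputable def Ppt (U : Matrix (Fin n) (Fin n) ℂ) (x : ℝ) (z : Fin n → ℂ) :
    Matrix (Fin n) (Fin n) ℂ × (Fin n → ℂ) :=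
  (U + ((Complex.I * (x : ℂ)) / 2) • outerMat z z, (x : ℂ) • z)

lemma act_Ppt (U : Matrix (Fin n) (Fin n) ℂ) (x : ℝ) (z : Fin n → ℂ)
    (k : Matrix.unitaryGroup (Fin n) ℂ) :
    act k (Ppt U x z) =
      ((k : Matrix (Fin n) (Fin n) ℂ) * U * star (k : Matrix (Fin n) (Fin n) ℂ) +
        ((Complex.I * (x : ℂ)) / 2) • outerMat ((k : Matrix (Fin n) (Fin n) ℂ).mulVec z)
          ((k : Matrix (Fin n) (Fin n) ℂ).mulVec z),
       (x : ℂ) • (k : Matrix (Fin n) (Fin n) ℂ).mulVec z) := by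
  simp only [act, Ppt, Matrix.mul_add, Matrix.add_mul, Matrix.mulVec_smul, outer_mulVec,
    Matrix.mul_smul, Matrix.smul_mul]

lemma act_Ppt_stab {U : Matrix (Fin n) (Fin n) ℂ} (x : ℝ) (z : Fin n → ℂ)
    {k : Matrix.unitaryGroup (Fin n) ℂ}
    (hk : (k : Matrix (Fin n) (Fin n) ℂ) * U * star (k : Matrix (Fin n) (Fin n) ℂ) = U) :
    act k (Ppt U x z) = Ppt U x ((k : Matrix (Fin n) (Fin n) ℂ).mulVec z) := by
  rw [act_Ppt, hk]; rfl

end CGaux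

open CGaux in
/-- Proposition 1 for `K = U(n)`: the set of `U(n)`-orbits of
`O^G_{(U,x)} ∩ pr⁻¹(O^K_X)` is in bijection with the set of `H`-orbits of `F_X`,
where `H` is the stabilizer of `U` in `U(n)` and
`F_X = {z : U + (i x/2) z z* ∈ O^K_X}`. -/
theorem orbit_bijection {n : ℕ} (hn : 1 ≤ n)
    (U X : Matrix (Fin n) (Fin n) ℂ) (hU : Uᴴ = -U) (hX : Xᴴ = -X)
    (x : ℝ) (hx : x ≠ 0) :
    Nonempty (
      {S : Set (Matrix (Fin n) (Fin n) ℂ × (Fin n → ℂ)) |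
        ∃ p ∈ genOrbit U x ∩ prInv X,
          S = {q | ∃ k : Matrix.unitaryGroup (Fin n) ℂ,
            q = ((k : Matrix (Fin n) (Fin n) ℂ) * p.1 * star (k : Matrix (Fin n) (Fin n) ℂ),
                 (k : Matrix (Fin n) (Fin n) ℂ).mulVec p.2)}} ≃
      {S : Set (Fin n → ℂ) |
        ∃ z ∈ {z : Fin n → ℂ | ∃ A : Matrix.unitaryGroup (Fin n) ℂ,
            U + ((Complex.I * (x : ℂ)) / 2) • outerMat z z
              = (A : Matrix (Fin n) (Fin n) ℂ) * X * star (A : Matrix (Fin n) (Fin n) ℂ)},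
          S = {w | ∃ h : Matrix.unitaryGroup (Fin n) ℂ,
            (h : Matrix (Fin n) (Fin n) ℂ) * U * star (h : Matrix (Fin n) (Fin n) ℂ) = U ∧
            w = (h : Matrix (Fin n) (Fin n) ℂ).mulVec z}}) := by
  classical
  have hxC : (x : ℂ) ≠ 0 := Complex.ofReal_ne_zero.mpr hx
  -- the membership set `F`
  set F : Set (Fin n → ℂ) := {z : Fin n → ℂ | ∃ A : Matrix.unitaryGroup (Fin n) ℂ,
      U + ((Complex.I * (x : ℂ)) / 2) • outerMat z z
        = (A : Matrix (Fin n) (Fin n) ℂ) * X * star (A : Matrix (Fin n) (Fin n) ℂ)} with hF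
  -- `Ppt` of a point of `F` lies in `genOrbit ∩ prInv`
  have hPmem : ∀ z ∈ F, Ppt U x z ∈ genOrbit U x ∩ prInv X := by
    intro z hz
    constructor
    · exact ⟨1, z, by simp [Ppt]⟩
    · obtain ⟨A, hA⟩ := hz
      exact ⟨A, hA⟩
  -- decomposition of points of `genOrbit ∩ prInv`
  have hdecomp : ∀ p ∈ genOrbit U x ∩ prInv X,
      ∃ z ∈ F, Orb1 p = Orb1 (Ppt U x z) := by
    intro p hp
    obtain ⟨⟨k, z, hpz⟩, ⟨A, hA⟩⟩ := hp
    have hpact : p = act k (Ppt U x z) := by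
      rw [hpz]; simp only [act, Ppt, Matrix.mulVec_smul]
    refine ⟨z, ?_, ?_⟩
    · refine ⟨k⁻¹ * A, ?_⟩
      have hM : (k : Matrix (Fin n) (Fin n) ℂ) *
          (U + ((Complex.I * (x : ℂ)) / 2) • outerMat z z) *
          star (k : Matrix (Fin n) (Fin n) ℂ) =
          (A : Matrix (Fin n) (Fin n) ℂ) * X * star (A : Matrix (Fin n) (Fin n) ℂ) := by
        rw [← hA, hpz]
      calc U + ((Complex.I * (x : ℂ)) / 2) • outerMat z z
          = (star (k : Matrix (Fin n) (Fin n) ℂ) * (k : Matrix (Fin n) (Fin n) ℂ)) *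
            (U + ((Complex.I * (x : ℂ)) / 2) • outerMat z z) *
            (star (k : Matrix (Fin n) (Fin n) ℂ) * (k : Matrix (Fin n) (Fin n) ℂ)) := by
            rw [Unitary.coe_star_mul_self]; simp
        _ = star (k : Matrix (Fin n) (Fin n) ℂ) *
            ((k : Matrix (Fin n) (Fin n) ℂ) *
              (U + ((Complex.I * (x : ℂ)) / 2) • outerMat z z) *
              star (k : Matrix (Fin n) (Fin n) ℂ)) * (k : Matrix (Fin n) (Fin n) ℂ) := by
            noncomm_ring
        _ = star (k : Matrix (Fin n) (Fin n) ℂ) *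
            ((A : Matrix (Fin n) (Fin n) ℂ) * X * star (A : Matrix (Fin n) (Fin n) ℂ)) *
            (k : Matrix (Fin n) (Fin n) ℂ) := by rw [hM]
        _ = ((k⁻¹ * A : Matrix.unitaryGroup (Fin n) ℂ) : Matrix (Fin n) (Fin n) ℂ) * X *
            star ((k⁻¹ * A : Matrix.unitaryGroup (Fin n) ℂ) : Matrix (Fin n) (Fin n) ℂ) := by
            push_cast [Submonoid.coe_mul, CGaux.coe_inv]
            rw [StarMul.star_mul, star_star]
            noncomm_ring
    · exact Orb1_eq_of_mem ⟨k, hpact⟩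
  -- equal `Orb1` of base points gives equal `Orb2`
  have hOrb12 : ∀ z w : Fin n → ℂ, Orb1 (Ppt U x z) = Orb1 (Ppt U x w) →
      Orb2 U z = Orb2 U w := by
    intro z w h
    have hw : Ppt U x w ∈ Orb1 (Ppt U x z) := h ▸ mem_Orb1_self _
    obtain ⟨k, hk⟩ := hw
    rw [act_Ppt] at hk
    have h2 : (x : ℂ) • w = (x : ℂ) • (k : Matrix (Fin n) (Fin n) ℂ).mulVec z := congrArg Prod.snd hk
    have hwz : w = (k : Matrix (Fin n) (Fin n) ℂ).mulVec z := smul_right_injective _ hxC h2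
    have h1 : U + ((Complex.I * (x : ℂ)) / 2) • outerMat w w =
        (k : Matrix (Fin n) (Fin n) ℂ) * U * star (k : Matrix (Fin n) (Fin n) ℂ) +
        ((Complex.I * (x : ℂ)) / 2) • outerMat w w := by
      have := congrArg Prod.fst hk
      simpa [Ppt, ← hwz] using this
    have hstab : (k : Matrix (Fin n) (Fin n) ℂ) * U * star (k : Matrix (Fin n) (Fin n) ℂ) = U :=
      (add_right_cancel h1).symm
    exact (Orb2_eq_of_mem ⟨k, hstab, hwz⟩).symm
  -- equal `Orb2` gives equal `Orb1` of base points
  have hOrb21 : ∀ z w : Fin n → ℂ, Orb2 U z = Orb2 U w →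
      Orb1 (Ppt U x z) = Orb1 (Ppt U x w) := by
    intro z w h
    have hz : z ∈ Orb2 U w := h ▸ mem_Orb2_self U z
    obtain ⟨k, hkst, hkz⟩ := hz
    exact Orb1_eq_of_mem ⟨k, by rw [act_Ppt_stab x w hkst, ← hkz]⟩
  -- build the bijection from the `F`-side to the orbit side
  let R := {S : Set (Fin n → ℂ) | ∃ z ∈ F, S = Orb2 U z}
  let L := {S : Set (Matrix (Fin n) (Fin n) ℂ × (Fin n → ℂ)) |
    ∃ p ∈ genOrbit U x ∩ prInv X, S = Orb1 p}
  let g : R → L := fun S =>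
    ⟨Orb1 (Ppt U x S.2.choose), ⟨Ppt U x S.2.choose, hPmem _ S.2.choose_spec.1, rfl⟩⟩
  have hg : Function.Bijective g := by
    constructor
    · rintro S1 S2 hS
      have h1 : Orb1 (Ppt U x S1.2.choose) = Orb1 (Ppt U x S2.2.choose) :=
        congrArg Subtype.val hS
      have h2 := hOrb12 _ _ h1
      apply Subtype.ext
      rw [S1.2.choose_spec.2, S2.2.choose_spec.2, h2]
    · rintro ⟨T, hT⟩
      obtain ⟨z, hzF, hTz⟩ := hdecomp hT.choose hT.choose_spec.1
      refine ⟨⟨Orb2 U z, ⟨z, hzF, rfl⟩⟩, ?_⟩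
      apply Subtype.ext
      show Orb1 (Ppt U x _) = T
      have hspec := (⟨z, hzF, rfl⟩ : ∃ z' ∈ F, Orb2 U z = Orb2 U z')
      have h3 : Orb2 U z = Orb2 U ((⟨z, hzF, (rfl : Orb2 U z = Orb2 U z)⟩ :
          ∃ z' ∈ F, Orb2 U z = Orb2 U z').choose) := by
        exact (⟨z, hzF, rfl⟩ : ∃ z' ∈ F, Orb2 U z = Orb2 U z').choose_spec.2
      calc Orb1 (Ppt U x (Exists.choose _))
          = Orb1 (Ppt U x z) := hOrb21 _ _ h3.symm
        _ = Orb1 hT.choose := hTz.symm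
        _ = T := hT.choose_spec.2.symm
  exact ⟨(Equiv.ofBijective g hg).symm⟩
end

section
/- Let n ≥ 2, let α > 0 be real, let a ∈ ℤ, and let μ = (μ_1,…,μ_n) ∈ ℤⁿ be dominant (μ_1 ≥ … ≥ μ_n) with μ ≠ (a,…,a). Suppose there exist z ∈ ℂⁿ and A ∈ U(n) such that i·a·I + (iα/2)·zz* = A·(i·diag(μ))·A*. Then, setting b := a + (α/2)·‖z‖², b is an integer with b > a, and there exists p with 1 ≤ p ≤ n such that μ_k = b for 1 ≤ k ≤ p and μ_k = a for p < k ≤ n; i.e. μ = (b,…,b,a,…,a). (Necessity direction of Theorem 4, Case α > 0.) -/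
open Matrix Complex Finset

/-- necessity in Theorem 4, case `α > 0`: if
`i a I + (i α/2) z z*` is unitarily conjugate to `i diag(μ)` for some dominant
`μ ≠ (a,…,a)`, then `b := a + (α/2)‖z‖²` is an integer `> a` and
`μ = (b,…,b,a,…,a)` with `b` occurring `p` times, `1 ≤ p ≤ n`. -/
theorem mu_form_of_pos {n : ℕ} (hn : 2 ≤ n) (α : ℝ) (hα : 0 < α) (a : ℤ)
    (mu : Fin n → ℤ) (hmu : ∀ i j : Fin n, i ≤ j → mu j ≤ mu i)
    (hne : mu ≠ fun _ => a)
    (z : Fin n → ℂ) (A : Matrix.unitaryGroup (Fin n) ℂ)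
    (hconj : (Complex.I * (a : ℂ)) • (1 : Matrix (Fin n) (Fin n) ℂ)
        + ((Complex.I * (α : ℂ)) / 2) • outerMat z z
      = (A : Matrix (Fin n) (Fin n) ℂ) *
          (Complex.I • Matrix.diagonal fun i => ((mu i : ℤ) : ℂ)) *
          star (A : Matrix (Fin n) (Fin n) ℂ)) :
    ∃ b : ℤ, ((b : ℝ) = (a : ℝ) + (α / 2) * ∑ j, Complex.normSq (z j)) ∧ a < b ∧
      ∃ p : ℕ, 1 ≤ p ∧ p ≤ n ∧
        ∀ k : Fin n, ((k : ℕ) < p → mu k = b) ∧ (p ≤ (k : ℕ) → mu k = a) := by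
  have hpos : 0 < n := by omega
  set Au : Matrix (Fin n) (Fin n) ℂ := (A : Matrix (Fin n) (Fin n) ℂ) with hAu
  have hA1 : star Au * Au = 1 := A.prop.1
  have hA2 : Au * star Au = 1 := A.prop.2
  set w : Fin n → ℂ := star Au *ᵥ z with hw
  set D : Matrix (Fin n) (Fin n) ℂ := Matrix.diagonal fun i => ((mu i : ℤ) : ℂ) with hD
  -- conjugated equation
  have houter : star Au * outerMat z z * Au = outerMat w w := by
    ext i j
    simp only [Matrix.mul_apply, outerMat, Matrix.of_apply, hw, Matrix.mulVec, dotProduct,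
      Matrix.star_apply, map_sum, _root_.map_mul, Complex.star_def, Complex.conj_conj,
      Finset.sum_mul, Finset.mul_sum]
    exact Finset.sum_congr rfl fun l _ => Finset.sum_congr rfl fun k _ => by ring
  have hE : (Complex.I * (a : ℂ)) • (1 : Matrix (Fin n) (Fin n) ℂ)
      + ((Complex.I * (α : ℂ)) / 2) • outerMat w w = Complex.I • D := by
    have h1 : star Au * ((Complex.I * (a : ℂ)) • (1 : Matrix (Fin n) (Fin n) ℂ)
        + ((Complex.I * (α : ℂ)) / 2) • outerMat z z) * Au
        = star Au * (Au * (Complex.I • D) * star Au) * Au := by rw [hconj]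
    calc (Complex.I * (a : ℂ)) • (1 : Matrix (Fin n) (Fin n) ℂ)
        + ((Complex.I * (α : ℂ)) / 2) • outerMat w w
        = star Au * ((Complex.I * (a : ℂ)) • (1 : Matrix (Fin n) (Fin n) ℂ)
            + ((Complex.I * (α : ℂ)) / 2) • outerMat z z) * Au := by
          simp only [Matrix.mul_add, Matrix.add_mul, Matrix.mul_smul, Matrix.smul_mul,
            Matrix.mul_one, hA1, houter]
      _ = star Au * (Au * (Complex.I • D) * star Au) * Au := h1
      _ = Complex.I • D := by
          rw [Matrix.mul_assoc, Matrix.mul_assoc, hA1, Matrix.mul_one, ← Matrix.mul_assoc,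
            hA1, Matrix.one_mul]
  -- entrywise equations
  have keyd : ∀ i : Fin n, ((mu i : ℝ) : ℂ) = (a : ℝ) + ((α / 2) * Complex.normSq (w i) : ℝ) := by
    intro i
    have h := congrFun (congrFun hE i) i
    simp only [Matrix.add_apply, Matrix.smul_apply, Matrix.one_apply_eq, Matrix.diagonal_apply_eq,
      outerMat, Matrix.of_apply, smul_eq_mul, mul_one, hD] at h
    rw [Complex.mul_conj] at h
    have h2 : Complex.I * ((a : ℂ) + (α : ℂ) / 2 * (Complex.normSq (w i) : ℂ))
        = Complex.I * (mu i : ℂ) := by rw [← h]; ring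
    have h3 := mul_left_cancel₀ Complex.I_ne_zero h2
    push_cast
    linear_combination -h3
  have keyo : ∀ i j : Fin n, i ≠ j → w i = 0 ∨ w j = 0 := by
    intro i j hij
    have h := congrFun (congrFun hE i) j
    simp only [Matrix.add_apply, Matrix.smul_apply, Matrix.one_apply_ne hij,
      Matrix.diagonal_apply_ne _ hij, outerMat, Matrix.of_apply, smul_eq_mul, mul_zero,
      zero_add, smul_zero, hD] at h
    have hne2 : (Complex.I * (α : ℂ)) / 2 ≠ 0 := by
      apply div_ne_zero _ two_ne_zero
      exact mul_ne_zero Complex.I_ne_zero (by exact_mod_cast hα.ne')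
    have := (mul_eq_zero.1 ((mul_eq_zero.1 h).resolve_left hne2))
    rcases this with h' | h'
    · exact Or.inl h'
    · exact Or.inr (by simpa using h')
  -- the special index
  obtain ⟨i0, hi0⟩ : ∃ i, mu i ≠ a := by
    by_contra h; push_neg at h; exact hne (funext h)
  have hwi0 : w i0 ≠ 0 := by
    intro h0
    apply hi0
    have := keyd i0
    rw [h0] at this
    simp at this
    exact_mod_cast this
  have hrest : ∀ j : Fin n, j ≠ i0 → mu j = a := by
    intro j hj
    have hwj : w j = 0 := (keyo j i0 hj).resolve_right hwi0
    have := keyd j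
    rw [hwj] at this
    simp at this
    exact_mod_cast this
  have hgt : a < mu i0 := by
    have := keyd i0
    have hn0 : 0 < Complex.normSq (w i0) := Complex.normSq_pos.2 hwi0
    have : ((mu i0 : ℝ)) = (a : ℝ) + (α / 2) * Complex.normSq (w i0) := by exact_mod_cast this
    have : (a : ℝ) < (mu i0 : ℝ) := by nlinarith
    exact_mod_cast this
  have hi0z : (i0 : ℕ) = 0 := by
    by_contra h
    have h0 : (⟨0, hpos⟩ : Fin n) ≠ i0 := by
      intro he; apply h; rw [← he]
    have := hmu ⟨0, hpos⟩ i0 (by simp [Fin.le_def])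
    have := hrest _ h0
    omega
  -- trace identity
  have htr := congrArg Matrix.trace hconj
  have htr2 : Complex.I * ((a : ℂ) * n + (α : ℂ) / 2 * (∑ j, (Complex.normSq (z j) : ℂ)))
      = Complex.I * ∑ i, ((mu i : ℤ) : ℂ) := by
    rw [Matrix.trace_mul_comm, ← Matrix.mul_assoc, hA1, Matrix.one_mul] at htr
    simp only [Matrix.trace_add, Matrix.trace_smul, Matrix.trace_one, hD,
      Matrix.trace_diagonal, smul_eq_mul, Fintype.card_fin] at htr
    have hto : Matrix.trace (outerMat z z) = ∑ j, (Complex.normSq (z j) : ℂ) := by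
      simp [Matrix.trace, Matrix.diag, outerMat, Complex.mul_conj]
    rw [hto] at htr
    linear_combination htr
  have htr3 := mul_left_cancel₀ Complex.I_ne_zero htr2
  -- sum of mu
  have hsum : ∑ i, ((mu i : ℤ) : ℂ) = (mu i0 : ℂ) + ((n : ℂ) - 1) * (a : ℂ) := by
    rw [← Finset.add_sum_erase _ _ (Finset.mem_univ i0)]
    congr 1
    have : ∀ j ∈ Finset.univ.erase i0, ((mu j : ℤ) : ℂ) = (a : ℂ) := by
      intro j hj
      rw [hrest j (Finset.mem_erase.1 hj).1]
    rw [Finset.sum_congr rfl this, Finset.sum_const, Finset.card_erase_of_mem (Finset.mem_univ i0)]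
    simp [Finset.card_univ, Nat.cast_sub (by omega : 1 ≤ n)]
  refine ⟨mu i0, ?_, hgt, 1, le_refl 1, by omega, ?_⟩
  · -- real equation for b
    rw [hsum] at htr3
    have : ((mu i0 : ℝ) : ℂ) = ((a : ℝ) + α / 2 * ∑ j, Complex.normSq (z j) : ℝ) := by
      push_cast at htr3 ⊢
      linear_combination -htr3
    exact_mod_cast this
  · intro k
    constructor
    · intro hk
      have : k = i0 := by
        apply Fin.ext; omega
      rw [this]
    · intro hk
      apply hrest
      intro he
      rw [he] at hk
      omega
end

section
/- Let n ≥ 2, let α < 0 be real, let a ∈ ℤ, and let μ = (μ_1,…,μ_n) ∈ ℤⁿ be dominant (μ_1 ≥ … ≥ μ_n) with μ ≠ (a,…,a). Suppose there exist z ∈ ℂⁿ and A ∈ U(n) such that i·a·I + (iα/2)·zz* = A·(i·diag(μ))·A*. Then, setting b := a + (α/2)·‖z‖², b is an integer with b < a, and there exists q with 1 ≤ q ≤ n such that μ_k = a for 1 ≤ k ≤ n−q and μ_k = b for n−q < k ≤ n; i.e. μ = (a,…,a,b,…,b). (Necessity direction of Theorem 4, Case α < 0.) -/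
open Matrix Complex Finset

lemma outerMat_conj {n : ℕ} (z : Fin n → ℂ) (M : Matrix (Fin n) (Fin n) ℂ) :
    star M * outerMat z z * M = outerMat (star M *ᵥ z) (star M *ᵥ z) := by
  ext i j
  simp only [outerMat, Matrix.of_apply, mul_apply, mulVec, dotProduct, Finset.sum_mul,
    Finset.mul_sum, map_sum, star_apply, _root_.map_mul, Complex.conj_conj,
    Matrix.star_apply, RCLike.star_def]
  refine Finset.sum_congr rfl fun k _ => Finset.sum_congr rfl fun m _ => ?_
  ring

/-- necessity in Theorem 4, case `α < 0`: if
`i a I + (i α/2) z z*` is unitarily conjugate to `i diag(μ)` for some dominant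
`μ ≠ (a,…,a)`, then `b := a + (α/2)‖z‖²` is an integer `< a` and
`μ = (a,…,a,b,…,b)` with `b` occurring `q` times, `1 ≤ q ≤ n`. -/
theorem mu_form_of_neg {n : ℕ} (hn : 2 ≤ n) (α : ℝ) (hα : α < 0) (a : ℤ)
    (mu : Fin n → ℤ) (hmu : ∀ i j : Fin n, i ≤ j → mu j ≤ mu i)
    (hne : mu ≠ fun _ => a)
    (z : Fin n → ℂ) (A : Matrix.unitaryGroup (Fin n) ℂ)
    (hconj : (Complex.I * (a : ℂ)) • (1 : Matrix (Fin n) (Fin n) ℂ)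
        + ((Complex.I * (α : ℂ)) / 2) • outerMat z z
      = (A : Matrix (Fin n) (Fin n) ℂ) *
          (Complex.I • Matrix.diagonal fun i => ((mu i : ℤ) : ℂ)) *
          star (A : Matrix (Fin n) (Fin n) ℂ)) :
    ∃ b : ℤ, ((b : ℝ) = (a : ℝ) + (α / 2) * ∑ j, Complex.normSq (z j)) ∧ b < a ∧
      ∃ q : ℕ, 1 ≤ q ∧ q ≤ n ∧
        ∀ k : Fin n, ((k : ℕ) < n - q → mu k = a) ∧ (n - q ≤ (k : ℕ) → mu k = b) := by
  classical
  set Am : Matrix (Fin n) (Fin n) ℂ := (A : Matrix (Fin n) (Fin n) ℂ) with hAm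
  have hA1 : star Am * Am = 1 := A.2.1
  have hA2 : Am * star Am = 1 := A.2.2
  set w : Fin n → ℂ := star Am *ᵥ z with hwdef
  -- key matrix identity
  have key : (Complex.I • Matrix.diagonal fun i => ((mu i : ℤ) : ℂ))
      = (Complex.I * (a : ℂ)) • (1 : Matrix (Fin n) (Fin n) ℂ)
        + ((Complex.I * (α : ℂ)) / 2) • outerMat w w := by
    have h1 : star Am * ((Complex.I * (a : ℂ)) • (1 : Matrix (Fin n) (Fin n) ℂ)
        + ((Complex.I * (α : ℂ)) / 2) • outerMat z z) * Am
        = star Am * (Am * (Complex.I • Matrix.diagonal fun i => ((mu i : ℤ) : ℂ)) * star Am) * Am := by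
      rw [hconj]
    calc (Complex.I • Matrix.diagonal fun i => ((mu i : ℤ) : ℂ))
        = (star Am * Am) * (Complex.I • Matrix.diagonal fun i => ((mu i : ℤ) : ℂ))
            * (star Am * Am) := by rw [hA1]; simp
      _ = star Am * (Am * (Complex.I • Matrix.diagonal fun i => ((mu i : ℤ) : ℂ)) * star Am) * Am := by
          simp only [Matrix.mul_assoc]
      _ = star Am * ((Complex.I * (a : ℂ)) • (1 : Matrix (Fin n) (Fin n) ℂ)
            + ((Complex.I * (α : ℂ)) / 2) • outerMat z z) * Am := h1.symm
      _ = (Complex.I * (a : ℂ)) • (1 : Matrix (Fin n) (Fin n) ℂ)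
            + ((Complex.I * (α : ℂ)) / 2) • outerMat w w := by
          rw [Matrix.mul_add, Matrix.add_mul, Matrix.mul_smul, Matrix.smul_mul,
            Matrix.mul_smul, Matrix.smul_mul, Matrix.mul_one, hA1, hwdef,
            ← outerMat_conj z (Am)]
  -- entrywise consequences
  have hent : ∀ i j : Fin n,
      Complex.I * (Matrix.diagonal fun i => ((mu i : ℤ) : ℂ)) i j
        = Complex.I * (a : ℂ) * (1 : Matrix (Fin n) (Fin n) ℂ) i j
          + Complex.I * (α : ℂ) / 2 * (w i * (starRingEnd ℂ) (w j)) := by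
    intro i j
    have := congrArg (fun M : Matrix (Fin n) (Fin n) ℂ => M i j) key
    simpa [outerMat, Matrix.add_apply, Matrix.smul_apply, smul_eq_mul] using this
  have hIa2 : Complex.I * (α : ℂ) / 2 ≠ 0 := by
    simp [Complex.I_ne_zero, Complex.ofReal_eq_zero, ne_of_lt hα, div_eq_zero_iff]
  have hoff : ∀ i j : Fin n, i ≠ j → w i * (starRingEnd ℂ) (w j) = 0 := by
    intro i j hij
    have h := hent i j
    rw [Matrix.diagonal_apply_ne _ hij, Matrix.one_apply_ne hij] at h
    simp only [mul_zero, zero_add] at h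
    exact (mul_eq_zero.mp h.symm).resolve_left hIa2
  have hval : ∀ i : Fin n, (mu i : ℝ) = (a : ℝ) + (α / 2) * Complex.normSq (w i) := by
    intro i
    have h := hent i i
    rw [Matrix.diagonal_apply_eq, Matrix.one_apply_eq, Complex.mul_conj] at h
    have h2 : ((mu i : ℤ) : ℂ) = (a : ℂ) + (α : ℂ) / 2 * (Complex.normSq (w i) : ℂ) := by
      have := mul_left_cancel₀ Complex.I_ne_zero
        (by rw [h]; ring : Complex.I * ((mu i : ℤ) : ℂ)
          = Complex.I * ((a : ℂ) + (α : ℂ) / 2 * (Complex.normSq (w i) : ℂ)))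
      exact this
    exact_mod_cast h2
  -- the exceptional index
  obtain ⟨i₀, hi₀⟩ : ∃ i, mu i ≠ a := by
    by_contra h
    push_neg at h
    exact hne (funext h)
  have hwi₀ : w i₀ ≠ 0 := by
    intro h0
    have := hval i₀
    rw [h0] at this
    simp at this
    exact hi₀ (by exact_mod_cast this)
  have hw0 : ∀ j, j ≠ i₀ → w j = 0 := by
    intro j hj
    by_contra h0
    have := hoff j i₀ hj
    rcases mul_eq_zero.mp this with h | h
    · exact h0 h
    · exact hwi₀ (by simpa using h)
  have hmua : ∀ j, j ≠ i₀ → mu j = a := by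
    intro j hj
    have := hval j
    rw [hw0 j hj] at this
    simp at this
    exact_mod_cast this
  -- norm preservation
  have hsum : ∑ j, Complex.normSq (w j) = ∑ j, Complex.normSq (z j) := by
    have hc : star w ⬝ᵥ w = star z ⬝ᵥ z := by
      rw [hwdef, Matrix.star_mulVec, Matrix.dotProduct_mulVec, Matrix.vecMul_vecMul]
      rw [show (star Am)ᴴ * star Am = Am * star Am from by
        simp [Matrix.star_eq_conjTranspose], hA2]
      simp
    have hwc : (↑(∑ j, Complex.normSq (w j)) : ℂ) = (↑(∑ j, Complex.normSq (z j)) : ℂ) := by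
      push_cast
      calc (∑ j, (Complex.normSq (w j) : ℂ)) = star w ⬝ᵥ w := by
            simp [dotProduct, Pi.star_apply, RCLike.star_def, Complex.normSq_eq_conj_mul_self]
        _ = star z ⬝ᵥ z := hc
        _ = ∑ j, (Complex.normSq (z j) : ℂ) := by
            simp [dotProduct, Pi.star_apply, RCLike.star_def, Complex.normSq_eq_conj_mul_self]
    exact_mod_cast hwc
  have hsumw : ∑ j, Complex.normSq (w j) = Complex.normSq (w i₀) := by
    rw [Finset.sum_eq_single i₀]
    · intro j _ hj; rw [hw0 j hj]; simp
    · intro h; exact absurd (Finset.mem_univ i₀) h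
  have hblt : mu i₀ < a := by
    have h := hval i₀
    have hpos : 0 < Complex.normSq (w i₀) := Complex.normSq_pos.mpr hwi₀
    have : (mu i₀ : ℝ) < (a : ℝ) := by nlinarith
    exact_mod_cast this
  refine ⟨mu i₀, ?_, hblt, 1, le_refl 1, by omega, ?_⟩
  · rw [hval i₀, ← hsumw, hsum]
  · -- i₀ is the last index
    have hi₀n : (i₀ : ℕ) = n - 1 := by
      by_contra h
      have hi₀lt : (i₀ : ℕ) < n - 1 := by have := i₀.isLt; omega
      set last : Fin n := ⟨n - 1, by omega⟩ with hlast
      have hle : i₀ ≤ last := by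
        simp only [Fin.le_def, hlast]
        omega
      have h1 : mu last ≤ mu i₀ := hmu i₀ last hle
      have h2 : mu last = a := hmua last (by
        intro hli; apply h
        have := congrArg Fin.val hli
        simpa [hlast] using this.symm)
      omega
    intro k
    constructor
    · intro hk
      exact hmua k (by intro hki; rw [hki] at hk; omega)
    · intro hk
      have : (k : ℕ) = n - 1 := by omega
      have : k = i₀ := Fin.ext (by omega)
      rw [this]
end

section
/- Let n ≥ 1, λ = (λ_1,…,λ_n) ∈ ℝⁿ, μ = (μ_1,…,μ_n) ∈ ℝⁿ, α ∈ ℝ, z ∈ ℂⁿ, and suppose there exists A ∈ U(n) such that i·diag(λ) + (iα/2)·zz* = A·(i·diag(μ))·A*. Then for every k ∈ {1,…,n}: ∏_{i=1}^n (μ_k − λ_i) = (α/2)·Σ_{j=1}^n |z_j|²·∏_{i≠j} (μ_k − λ_i). Equivalently, V_{λ,μ} = (α/2)·B_{λ,μ}·(|z_1|², …, |z_n|²)ᵀ. (Key linear system in the proof of Theorem 3.) -/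
open Matrix Complex Finset

open Polynomial in
lemma eval_det_aux {n : ℕ} (d u v : Fin n → ℂ) (t : ℂ) :
    Polynomial.eval t (Matrix.det (Matrix.diagonal (fun i => X + C (d i))
        + Matrix.replicateCol (Fin 1) (fun i => C (u i)) * Matrix.replicateRow (Fin 1) (fun i => C (v i))))
    = (Matrix.diagonal (fun i => t + d i) + Matrix.replicateCol (Fin 1) u * Matrix.replicateRow (Fin 1) v).det := by
  rw [show Polynomial.eval t = (Polynomial.evalRingHom t : ℂ[X] →+* ℂ) from rfl,
    RingHom.map_det]
  congr 1
  ext i j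
  simp [Matrix.mul_apply, Matrix.diagonal_apply]
  by_cases hij : i = j <;> simp [hij]

open Polynomial in
lemma det_diag_add_rank_one {n : ℕ} (d u v : Fin n → ℂ) :
    (Matrix.diagonal d + Matrix.replicateCol (Fin 1) u * Matrix.replicateRow (Fin 1) v).det
      = ∏ i, d i + ∑ j, u j * v j * ∏ i ∈ Finset.univ.erase j, d i := by
  have hpq : (Matrix.det (Matrix.diagonal (fun i => X + C (d i))
        + Matrix.replicateCol (Fin 1) (fun i => C (u i)) * Matrix.replicateRow (Fin 1) (fun i => C (v i))))
      = ∏ i, (X + C (d i)) + ∑ j, C (u j * v j) * ∏ i ∈ Finset.univ.erase j, (X + C (d i)) := by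
    apply Polynomial.eq_of_infinite_eval_eq
    apply Set.Infinite.mono (s := (Set.range (fun i => -d i))ᶜ)
    · intro t ht
      simp only [Set.mem_compl_iff, Set.mem_range, not_exists] at ht
      have hne : ∀ i, t + d i ≠ 0 := by
        intro i h0
        exact ht i (by linear_combination -h0)
      have hM : Matrix.diagonal (fun i => t + d i) + Matrix.replicateCol (Fin 1) u * Matrix.replicateRow (Fin 1) v
          = Matrix.diagonal (fun i => t + d i)
            * (1 + Matrix.replicateCol (Fin 1) (fun i => (t + d i)⁻¹ * u i) * Matrix.replicateRow (Fin 1) v) := by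
        rw [mul_add, mul_one, ← Matrix.mul_assoc]
        congr 2
        ext i j
        simp [Matrix.mul_apply, Matrix.diagonal_apply]
        exact (mul_inv_cancel_left₀ (hne i) _).symm
      simp only [Set.mem_setOf_eq]
      rw [eval_det_aux, hM, Matrix.det_mul]
      erw [Matrix.det_one_add_replicateCol_mul_replicateRow (ι := Fin 1)]
      rw [Matrix.det_diagonal]
      simp only [eval_add, eval_prod, eval_finset_sum, eval_mul, eval_X, eval_C,
        dotProduct, mul_add, mul_one, Finset.mul_sum]
      congr 1
      apply Finset.sum_congr rfl
      intro j _
      rw [← Finset.mul_prod_erase _ _ (Finset.mem_univ j)]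
      field_simp [hne j]
    · exact Set.Finite.infinite_compl (Set.finite_range _)
  have := congrArg (Polynomial.eval 0) hpq
  rw [eval_det_aux] at this
  simpa [eval_prod, eval_finset_sum] using this

/-- key linear system in the proof of Theorem 3: if
`i diag(λ) + (i α/2) z z* = A (i diag(μ)) A*` for some `A ∈ U(n)`, then for
every `k`, `∏ᵢ (μ_k − λᵢ) = (α/2) Σⱼ |zⱼ|² ∏_{i ≠ j} (μ_k − λᵢ)`; equivalently
`V_{λ,μ} = (α/2) B_{λ,μ} (|z₁|²,…,|zₙ|²)ᵀ`. -/
theorem linear_system_of_conj {n : ℕ} (hn : 1 ≤ n) (lam mu : Fin n → ℝ) (α : ℝ)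
    (z : Fin n → ℂ)
    (h : ∃ A : Matrix.unitaryGroup (Fin n) ℂ,
      Complex.I • Matrix.diagonal (fun i => ((lam i : ℝ) : ℂ))
          + ((Complex.I * (α : ℂ)) / 2) • outerMat z z
        = (A : Matrix (Fin n) (Fin n) ℂ) *
            (Complex.I • Matrix.diagonal fun i => ((mu i : ℝ) : ℂ)) *
            star (A : Matrix (Fin n) (Fin n) ℂ)) :
    ∀ k : Fin n,
      (∏ i, (mu k - lam i))
        = (α / 2) * ∑ j, Complex.normSq (z j) *
            ∏ i ∈ Finset.univ.erase j, (mu k - lam i) := by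
  obtain ⟨A, hA⟩ := h
  set c : ℂ := (α : ℂ) / 2 with hc
  -- Step 1: divide out the i
  have hM : Matrix.diagonal (fun i => ((lam i : ℝ) : ℂ)) + c • outerMat z z
      = (A : Matrix (Fin n) (Fin n) ℂ) * Matrix.diagonal (fun i => ((mu i : ℝ) : ℂ))
          * star (A : Matrix (Fin n) (Fin n) ℂ) := by
    have h2 := congrArg (fun X : Matrix (Fin n) (Fin n) ℂ => (-Complex.I) • X) hA
    simp only [smul_add, smul_smul, Matrix.mul_smul, Matrix.smul_mul] at h2
    have e1 : (-Complex.I) * Complex.I = 1 := by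
      simp [Complex.I_mul_I]
    have e2 : (-Complex.I) * (Complex.I * (α : ℂ) / 2) = c := by
      rw [hc]; linear_combination (-(α:ℂ)/2) * Complex.I_sq
    rw [e1, e2] at h2
    simpa using h2
  intro k
  set d : Fin n → ℂ := fun i => ((mu k : ℝ) : ℂ) - lam i with hd
  have key : (Matrix.diagonal d
      + Matrix.replicateCol (Fin 1) (fun l => -c * z l)
        * Matrix.replicateRow (Fin 1) (fun j => (starRingEnd ℂ) (z j))).det = 0 := by
    have hmat : Matrix.diagonal d
        + Matrix.replicateCol (Fin 1) (fun l => -c * z l)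
          * Matrix.replicateRow (Fin 1) (fun j => (starRingEnd ℂ) (z j))
        = ((mu k : ℝ) : ℂ) • (1 : Matrix (Fin n) (Fin n) ℂ)
          - (Matrix.diagonal (fun i => ((lam i : ℝ) : ℂ)) + c • outerMat z z) := by
      ext i j
      simp only [Matrix.add_apply, Matrix.sub_apply, Matrix.smul_apply, Matrix.one_apply,
        Matrix.diagonal_apply, Matrix.mul_apply, Matrix.replicateCol_apply, Matrix.replicateRow_apply,
        outerMat, Matrix.of_apply, Finset.univ_unique, Finset.sum_singleton, smul_eq_mul, hd]
      by_cases hij : i = j <;> simp [hij] <;> ring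
    rw [hmat, hM]
    have hAA : (A : Matrix (Fin n) (Fin n) ℂ) * star (A : Matrix (Fin n) (Fin n) ℂ) = 1 :=
      Unitary.mul_star_self_of_mem A.2
    have hconj : ((mu k : ℝ) : ℂ) • (1 : Matrix (Fin n) (Fin n) ℂ)
        - (A : Matrix (Fin n) (Fin n) ℂ) * Matrix.diagonal (fun i => ((mu i : ℝ) : ℂ))
          * star (A : Matrix (Fin n) (Fin n) ℂ)
        = (A : Matrix (Fin n) (Fin n) ℂ)
          * (((mu k : ℝ) : ℂ) • (1 : Matrix (Fin n) (Fin n) ℂ)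
              - Matrix.diagonal (fun i => ((mu i : ℝ) : ℂ)))
          * star (A : Matrix (Fin n) (Fin n) ℂ) := by
      rw [Matrix.mul_sub, Matrix.sub_mul, Matrix.mul_smul, Matrix.smul_mul, Matrix.mul_one, hAA]
    have hdet0 : (((mu k : ℝ) : ℂ) • (1 : Matrix (Fin n) (Fin n) ℂ)
        - Matrix.diagonal (fun i => ((mu i : ℝ) : ℂ))).det = 0 := by
      rw [show ((mu k : ℝ) : ℂ) • (1 : Matrix (Fin n) (Fin n) ℂ)
            - Matrix.diagonal (fun i => ((mu i : ℝ) : ℂ))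
          = Matrix.diagonal (fun i => ((mu k : ℝ) : ℂ) - mu i) by
        ext i j
        by_cases hij : i = j <;> simp [Matrix.diagonal_apply, Matrix.one_apply, hij]]
      rw [Matrix.det_diagonal]
      exact Finset.prod_eq_zero (Finset.mem_univ k) (by simp)
    rw [hconj, Matrix.det_mul, Matrix.det_mul, hdet0]
    ring
  have hexp := det_diag_add_rank_one d (fun l => -c * z l) (fun j => (starRingEnd ℂ) (z j))
  rw [key] at hexp
  have hsum : ∀ j, (-c * z j) * (starRingEnd ℂ) (z j)
      = -c * ((Complex.normSq (z j) : ℝ) : ℂ) := by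
    intro j
    rw [mul_assoc, Complex.mul_conj]
  simp only [hsum] at hexp
  -- hexp : 0 = ∏ d i + ∑ j, (-c * normSq) * ∏ erase
  have hC : ((∏ i, (mu k - lam i) : ℝ) : ℂ)
      = (((α / 2) * ∑ j, Complex.normSq (z j) *
          ∏ i ∈ Finset.univ.erase j, (mu k - lam i) : ℝ) : ℂ) := by
    push_cast
    rw [hc] at hexp
    simp only [hd] at hexp
    rw [Finset.mul_sum]
    have h1 : (∏ i, (((mu k : ℝ) : ℂ) - ((lam i : ℝ) : ℂ)))
        = ∑ j, -(-((α : ℂ)/2) * ((Complex.normSq (z j) : ℝ) : ℂ)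
            * ∏ i ∈ Finset.univ.erase j, (((mu k : ℝ) : ℂ) - ((lam i : ℝ) : ℂ))) := by
      rw [Finset.sum_neg_distrib]
      linear_combination -hexp
    rw [h1]
    exact Finset.sum_congr rfl (fun j _ => by ring)
  exact_mod_cast hC
end

section
/- Let n ≥ 1, λ, μ ∈ ℝⁿ, and let α be a nonzero real number. Assume that the matrix B_{λ,μ} is invertible. Then for every z ∈ ℂⁿ, there exists A ∈ U(n) with i·diag(λ) + (iα/2)·zz* = A·(i·diag(μ))·A* if and only if (|z_1|², …, |z_n|²)ᵀ = (2/α)·B_{λ,μ}⁻¹·V_{λ,μ}. In other words, the set F_μ = { z ∈ ℂⁿ : U_λ + (α/2)·z×z ∈ O^K_μ } equals { z ∈ ℂⁿ : (|z_1|²,…,|z_n|²)ᵀ = (2/α)·B_{λ,μ}⁻¹·V_{λ,μ} }. (Description of F_μ in the proof of Theorem 3.) -/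
open Matrix Complex Finset Polynomial

/-- The matrix `B_{λ,μ}` with `(i,j)` entry `∏_{k ≠ j} (μ_i − λ_k)`. -/
noncomputable def Bmat {n : ℕ} (lam mu : Fin n → ℝ) : Matrix (Fin n) (Fin n) ℝ :=
  Matrix.of fun i j => ∏ k ∈ Finset.univ.erase j, (mu i - lam k)

/-- The vector `V_{λ,μ}` with `i`-th entry `∏ₖ (μ_i − λ_k)`. -/
noncomputable def Vvec {n : ℕ} (lam mu : Fin n → ℝ) : Fin n → ℝ :=
  fun i => ∏ k, (mu i - lam k)


lemma eval_charpoly' {n : ℕ} (M : Matrix (Fin n) (Fin n) ℂ) (x : ℂ) :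
    M.charpoly.eval x = (Matrix.diagonal (fun _ => x) - M).det := by
  rw [Matrix.charpoly, eval_det]
  congr 1
  ext i j
  rw [matPolyEquiv_eval]
  by_cases h : i = j
  · subst h
    simp [Matrix.charmatrix_apply_eq]
  · simp [Matrix.charmatrix_apply_ne _ _ _ h, Matrix.diagonal_apply_ne _ h]

lemma det_diag_add_outer {n : ℕ} (d : Fin n → ℂ) (hd : ∀ k, d k ≠ 0) (c : ℂ) (z : Fin n → ℂ) :
    (Matrix.diagonal d + c • outerMat z z).det
      = ∏ k, d k + c * ∑ j, z j * (starRingEnd ℂ) (z j) * ∏ k ∈ univ.erase j, d k := by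
  have hrw : c • outerMat z z = Matrix.replicateCol (Fin 1) (c • z) * Matrix.replicateRow (Fin 1) (star z) := by
    ext i j
    simp [outerMat, Matrix.mul_apply, Matrix.replicateCol, Matrix.replicateRow, Pi.smul_apply, smul_eq_mul]
    ring
  have hdet : IsUnit (Matrix.diagonal d).det := by
    rw [Matrix.det_diagonal]
    exact (Finset.prod_ne_zero_iff.2 fun k _ => hd k).isUnit
  have h1 : (Matrix.diagonal d)⁻¹ = Matrix.diagonal (fun j => (d j)⁻¹) := by
    apply Matrix.inv_eq_right_inv
    rw [Matrix.diagonal_mul_diagonal]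
    convert Matrix.diagonal_one with j
    exact mul_inv_cancel₀ (hd j)
  rw [hrw, Matrix.det_add_mul _ _ hdet, Matrix.det_diagonal, h1, Matrix.det_fin_one]
  have h2 : ((1 + Matrix.replicateRow (Fin 1) (star z) * Matrix.diagonal (fun j => (d j)⁻¹) * Matrix.replicateCol (Fin 1) (c • z) : Matrix (Fin 1) (Fin 1) ℂ)) 0 0
      = 1 + ∑ j, (starRingEnd ℂ) (z j) * (d j)⁻¹ * (c * z j) := by
    have h3 : (Matrix.replicateRow (Fin 1) (star z) * Matrix.diagonal (fun j => (d j)⁻¹) * Matrix.replicateCol (Fin 1) (c • z)) 0 0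
        = ∑ j, (starRingEnd ℂ) (z j) * (d j)⁻¹ * (c * z j) := by
      rw [Matrix.mul_apply]
      simp only [Matrix.mul_apply, Matrix.replicateRow_apply, Matrix.replicateCol_apply, Matrix.diagonal_apply,
        mul_ite, ite_mul, mul_zero, zero_mul, Finset.sum_ite_eq, Finset.sum_ite_eq',
        Finset.mem_univ, if_true, Finset.sum_mul, Pi.smul_apply, smul_eq_mul, Pi.star_apply]
      apply Finset.sum_congr rfl
      intro j _
      rw [starRingEnd_apply]
    rw [Matrix.add_apply, Matrix.one_apply_eq, h3]
  rw [h2, mul_add, mul_one, Finset.mul_sum, Finset.mul_sum]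
  congr 1
  apply Finset.sum_congr rfl
  intro j _
  rw [← Finset.mul_prod_erase univ d (Finset.mem_univ j)]
  field_simp [hd j]

lemma charpoly_diag_add_outer {n : ℕ} (l : Fin n → ℂ) (c : ℂ) (z : Fin n → ℂ) :
    (Matrix.diagonal l + c • outerMat z z).charpoly
      = ∏ k, (X - C (l k))
        - C c * ∑ j, C (z j * (starRingEnd ℂ) (z j)) * ∏ k ∈ univ.erase j, (X - C (l k)) := by
  apply Polynomial.eq_of_infinite_eval_eq
  apply Set.Infinite.mono ?_ ((Set.finite_range l).infinite_compl)
  intro x hx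
  have hx' : ∀ k, x - l k ≠ 0 := by
    intro k h
    exact hx ⟨k, by linear_combination -h⟩
  have hmat : Matrix.diagonal (fun _ => x) - (Matrix.diagonal l + c • outerMat z z)
      = Matrix.diagonal (fun k => x - l k) + (-c) • outerMat z z := by
    ext i j
    by_cases h : i = j
    · subst h
      simp [Matrix.diagonal_apply_eq, outerMat]
      ring
    · simp [Matrix.diagonal_apply_ne _ h, outerMat]
  have := det_diag_add_outer (fun k => x - l k) hx' (-c) z
  simp only [Set.mem_setOf_eq, eval_charpoly', hmat, this, eval_sub, eval_add, eval_mul,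
    eval_prod, eval_finset_sum, eval_sub, eval_X, eval_C, eval_mul]
  ring

lemma charpoly_diagonal' {n : ℕ} (v : Fin n → ℂ) :
    (Matrix.diagonal v).charpoly = ∏ i, (X - C (v i)) := by
  rw [Matrix.charpoly_of_upperTriangular _ (Matrix.blockTriangular_diagonal v)]
  simp

lemma charpoly_unitary_conj {n : ℕ} (U : Matrix.unitaryGroup (Fin n) ℂ)
    (M : Matrix (Fin n) (Fin n) ℂ) :
    ((U : Matrix (Fin n) (Fin n) ℂ) * M * star (U : Matrix (Fin n) (Fin n) ℂ)).charpoly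
      = M.charpoly := by
  apply Polynomial.eq_of_infinite_eval_eq
  apply Set.Infinite.mono (fun x _ => ?_) (Set.infinite_univ (α := ℂ))
  · simp only [Set.mem_setOf_eq, eval_charpoly']
    have hU : (U : Matrix (Fin n) (Fin n) ℂ) * star (U : Matrix (Fin n) (Fin n) ℂ) = 1 :=
      Matrix.mem_unitaryGroup_iff.mp U.2
    have h1 : Matrix.diagonal (fun _ : Fin n => x)
        - (U : Matrix (Fin n) (Fin n) ℂ) * M * star (U : Matrix (Fin n) (Fin n) ℂ)
        = (U : Matrix (Fin n) (Fin n) ℂ) * (Matrix.diagonal (fun _ => x) - M)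
            * star (U : Matrix (Fin n) (Fin n) ℂ) := by
      rw [Matrix.mul_sub, Matrix.sub_mul]
      congr 1
      have : Matrix.diagonal (fun _ : Fin n => x) = x • (1 : Matrix (Fin n) (Fin n) ℂ) := by
        rw [Matrix.smul_one_eq_diagonal]
      rw [this, Matrix.mul_smul, Matrix.mul_one, Matrix.smul_mul, hU]
    have hU' : star (U : Matrix (Fin n) (Fin n) ℂ) * (U : Matrix (Fin n) (Fin n) ℂ) = 1 :=
      Matrix.mem_unitaryGroup_iff'.mp U.2
    rw [h1, Matrix.det_mul, Matrix.det_mul, mul_comm, ← mul_assoc, ← Matrix.det_mul, hU']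
    simp

lemma star_perm_toMatrix {n : ℕ} (σ : Equiv.Perm (Fin n)) :
    star (σ.toPEquiv.toMatrix : Matrix (Fin n) (Fin n) ℂ) = (σ.symm.toPEquiv.toMatrix) := by
  ext i j
  rw [Matrix.star_apply, PEquiv.toMatrix_apply, PEquiv.toMatrix_apply]
  simp only [Equiv.toPEquiv_apply, Option.mem_def, Option.some.injEq]
  by_cases h : σ j = i
  · rw [if_pos h, if_pos (show σ.symm i = j by rw [← h, Equiv.symm_apply_apply])]
    simp
  · rw [if_neg h, if_neg (show ¬ σ.symm i = j from fun hc => h (by rw [← hc, Equiv.apply_symm_apply]))]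
    simp

lemma perm_mem_unitary {n : ℕ} (σ : Equiv.Perm (Fin n)) :
    (σ.toPEquiv.toMatrix : Matrix (Fin n) (Fin n) ℂ) ∈ Matrix.unitaryGroup (Fin n) ℂ := by
  rw [Matrix.mem_unitaryGroup_iff]
  rw [star_perm_toMatrix, ← PEquiv.toMatrix_trans, ← Equiv.toPEquiv_trans]
  simp [PEquiv.toMatrix_refl]

lemma perm_conj_diagonal {n : ℕ} (σ : Equiv.Perm (Fin n)) (v : Fin n → ℂ) :
    (σ.toPEquiv.toMatrix : Matrix (Fin n) (Fin n) ℂ) * Matrix.diagonal v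
        * star (σ.toPEquiv.toMatrix : Matrix (Fin n) (Fin n) ℂ)
      = Matrix.diagonal (v ∘ σ) := by
  rw [star_perm_toMatrix, PEquiv.toMatrix_toPEquiv_mul, PEquiv.mul_toMatrix_toPEquiv (f := σ.symm),
    Equiv.symm_symm]
  ext i j
  simp only [Matrix.submatrix_apply, id]
  by_cases h : i = j
  · subst h; simp
  · rw [Matrix.diagonal_apply_ne _ (fun hc => h (σ.injective hc)),
      Matrix.diagonal_apply_ne _ h]

lemma exists_comp_eq {n : ℕ} (f g : Fin n → ℂ) (hg : Function.Injective g)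
    (h : Finset.univ.val.map f = Finset.univ.val.map g) :
    ∃ σ : Equiv.Perm (Fin n), f = g ∘ σ := by
  have hmem : ∀ j, ∃ i, f i = g j := by
    intro j
    have : g j ∈ Finset.univ.val.map f := by
      rw [h]
      exact Multiset.mem_map_of_mem g (Finset.mem_univ j)
    obtain ⟨i, _, hi⟩ := Multiset.mem_map.1 this
    exact ⟨i, hi⟩
  choose s hs using hmem
  have hsinj : Function.Injective s := by
    intro j1 j2 h12
    apply hg
    rw [← hs j1, ← hs j2, h12]
  have hsbij : Function.Bijective s := Finite.injective_iff_bijective.1 hsinj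
  refine ⟨(Equiv.ofBijective s hsbij).symm, ?_⟩
  funext i
  have : s ((Equiv.ofBijective s hsbij).symm i) = i :=
    (Equiv.ofBijective s hsbij).apply_symm_apply i
  calc f i = f (s ((Equiv.ofBijective s hsbij).symm i)) := by rw [this]
    _ = g ((Equiv.ofBijective s hsbij).symm i) := hs _
    _ = (g ∘ (Equiv.ofBijective s hsbij).symm) i := rfl

lemma monic_eq_prod {n : ℕ} (p : Polynomial ℂ) (μC : Fin n → ℂ) (hp : p.Monic)
    (hdeg : p.natDegree = n) (hinj : Function.Injective μC)
    (hroot : ∀ i, p.eval (μC i) = 0) :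
    p = ∏ i, (X - C (μC i)) := by
  have hp0 : p ≠ 0 := hp.ne_zero
  have hq : (∏ i, (X - C (μC i))).Monic := monic_prod_of_monic _ _ fun i _ => monic_X_sub_C _
  have hqdeg : (∏ i : Fin n, (X - C (μC i))).natDegree = n := by
    rw [natDegree_prod_of_monic _ _ fun i _ => monic_X_sub_C _]
    simp
  have hle : Finset.univ.val.map μC ≤ p.roots := by
    rw [Multiset.le_iff_count]
    intro a
    by_cases ha : ∃ i, μC i = a
    · obtain ⟨i, rfl⟩ := ha
      rw [Multiset.count_map_eq_count' μC _ hinj, Multiset.count_univ]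
      rw [Polynomial.count_roots]
      exact (Polynomial.rootMultiplicity_pos hp0).mpr (hroot i)
    · have : a ∉ Multiset.map μC Finset.univ.val := by
        intro hc
        obtain ⟨i, _, hi⟩ := Multiset.mem_map.1 hc
        exact ha ⟨i, hi⟩
      rw [Multiset.count_eq_zero_of_notMem this]
      exact Nat.zero_le _
  have hdvd : (∏ i, (X - C (μC i))) ∣ p := by
    have h1 : (∏ i : Fin n, (X - C (μC i)))
        = ((Finset.univ.val.map μC).map fun a => X - C a).prod := by
      rw [Multiset.map_map]
      rfl
    rw [h1]
    exact (Multiset.prod_dvd_prod_of_le (Multiset.map_le_map hle)).trans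
      p.prod_multiset_X_sub_C_dvd
  have hassoc := Polynomial.associated_of_dvd_of_natDegree_le hdvd hp0 (by rw [hdeg, hqdeg])
  exact (Polynomial.eq_of_monic_of_associated hq hp hassoc).symm

lemma roots_prod_X_sub_C' {n : ℕ} (f : Fin n → ℂ) :
    (∏ i, (X - C (f i))).roots = Finset.univ.val.map f := by
  have h : ∏ i, (X - C (f i)) = ((Finset.univ.val.map f).map fun a => X - C a).prod := by
    rw [Multiset.map_map]
    rfl
  rw [h, Polynomial.roots_multiset_prod_X_sub_C]

lemma hermitian_conj_diag_of_charpoly {n : ℕ} (H : Matrix (Fin n) (Fin n) ℂ)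
    (hH : H.IsHermitian) (μC : Fin n → ℂ) (hinj : Function.Injective μC)
    (hcp : H.charpoly = ∏ i, (X - C (μC i))) :
    ∃ A : Matrix.unitaryGroup (Fin n) ℂ,
      H = (A : Matrix (Fin n) (Fin n) ℂ) * Matrix.diagonal μC
            * star (A : Matrix (Fin n) (Fin n) ℂ) := by
  have hspec := hH.spectral_theorem
  rw [Unitary.conjStarAlgAut_apply] at hspec
  have hcp2 : H.charpoly = ∏ i, (X - C ((RCLike.ofReal ∘ hH.eigenvalues) i)) := by
    conv_lhs => rw [hspec]
    rw [charpoly_unitary_conj hH.eigenvectorUnitary, charpoly_diagonal']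
  have hroots : Finset.univ.val.map (RCLike.ofReal ∘ hH.eigenvalues : Fin n → ℂ)
      = Finset.univ.val.map μC := by
    rw [← roots_prod_X_sub_C' (RCLike.ofReal ∘ hH.eigenvalues), ← roots_prod_X_sub_C' μC,
      ← hcp2, ← hcp]
  obtain ⟨σ, hσ⟩ := exists_comp_eq _ μC hinj hroots
  have hdiag : Matrix.diagonal (RCLike.ofReal ∘ hH.eigenvalues : Fin n → ℂ)
      = (σ.toPEquiv.toMatrix : Matrix (Fin n) (Fin n) ℂ) * Matrix.diagonal μC
          * star (σ.toPEquiv.toMatrix : Matrix (Fin n) (Fin n) ℂ) := by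
    rw [perm_conj_diagonal σ μC, hσ]
  refine ⟨hH.eigenvectorUnitary * ⟨_, perm_mem_unitary σ⟩, ?_⟩
  have hcoe : ((hH.eigenvectorUnitary * ⟨_, perm_mem_unitary σ⟩ :
      Matrix.unitaryGroup (Fin n) ℂ) : Matrix (Fin n) (Fin n) ℂ)
      = (hH.eigenvectorUnitary : Matrix (Fin n) (Fin n) ℂ) * σ.toPEquiv.toMatrix := rfl
  rw [hcoe, StarMul.star_mul]
  conv_lhs => rw [hspec, hdiag]
  simp only [Matrix.mul_assoc]


/-- description of `F_μ` in the proof of Theorem 3: if `B_{λ,μ}`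
is invertible and `α ≠ 0`, then `i diag(λ) + (i α/2) z z*` is unitarily
conjugate to `i diag(μ)` iff `(|z₁|²,…,|zₙ|²)ᵀ = (2/α) B_{λ,μ}⁻¹ V_{λ,μ}`. -/
theorem Fmu_description {n : ℕ} (hn : 1 ≤ n) (lam mu : Fin n → ℝ)
    (α : ℝ) (hα : α ≠ 0) (hB : IsUnit (Bmat lam mu).det) :
    ∀ z : Fin n → ℂ,
      (∃ A : Matrix.unitaryGroup (Fin n) ℂ,
        Complex.I • Matrix.diagonal (fun i => ((lam i : ℝ) : ℂ))
            + ((Complex.I * (α : ℂ)) / 2) • outerMat z z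
          = (A : Matrix (Fin n) (Fin n) ℂ) *
              (Complex.I • Matrix.diagonal fun i => ((mu i : ℝ) : ℂ)) *
              star (A : Matrix (Fin n) (Fin n) ℂ)) ↔
      (fun j => Complex.normSq (z j))
        = (2 / α) • (Bmat lam mu)⁻¹.mulVec (Vvec lam mu) := by
  intro z
  set w : Fin n → ℝ := fun j => Complex.normSq (z j) with hw
  set lamC : Fin n → ℂ := fun k => ((lam k : ℝ) : ℂ) with hlamC
  set μC : Fin n → ℂ := fun i => ((mu i : ℝ) : ℂ) with hμC
  set H : Matrix (Fin n) (Fin n) ℂ :=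
    Matrix.diagonal lamC + ((α : ℂ)/2) • outerMat z z with hH
  -- injectivity of mu
  have hμinj : Function.Injective mu := by
    intro i j hij
    by_contra hne
    have hrow : Bmat lam mu i = Bmat lam mu j := by
      funext k
      simp only [Bmat, Matrix.of_apply, hij]
    have hdet0 : (Bmat lam mu).det = 0 := Matrix.det_zero_of_row_eq hne hrow
    rw [hdet0] at hB
    exact (not_isUnit_zero hB)
  have hμCinj : Function.Injective μC := by
    intro i j hij
    exact hμinj (Complex.ofReal_inj.mp hij)
  -- H is Hermitian
  have hHherm : H.IsHermitian := by
    have houter : (outerMat z z).conjTranspose = outerMat z z := by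
      ext i j
      rw [Matrix.conjTranspose_apply]
      simp only [outerMat, Matrix.of_apply, star_mul', RCLike.star_def, Complex.conj_conj]
      ring
    have hdiagh : (Matrix.diagonal lamC).conjTranspose = Matrix.diagonal lamC := by
      have hst : star lamC = lamC := by
        funext k
        simp [hlamC, Complex.conj_ofReal]
      rw [Matrix.diagonal_conjTranspose, hst]
    rw [Matrix.IsHermitian, hH, Matrix.conjTranspose_add, Matrix.conjTranspose_smul, hdiagh,
      houter]
    congr 1
    have : star ((α : ℂ)/2) = (α : ℂ)/2 := by
      simp [RCLike.star_def, map_div₀, Complex.conj_ofReal]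
    rw [this]
  -- evaluation of charpoly of H at real points
  have hkey : ∀ x : ℝ, H.charpoly.eval (x : ℂ)
      = ((∏ k, (x - lam k)
          - α/2 * ∑ j, Complex.normSq (z j) * ∏ k ∈ univ.erase j, (x - lam k) : ℝ) : ℂ) := by
    intro x
    rw [hH, charpoly_diag_add_outer]
    simp only [eval_sub, eval_prod, eval_mul, eval_finset_sum, eval_X, eval_C]
    push_cast
    congr 1
    congr 1
    apply Finset.sum_congr rfl
    intro j _
    rw [Complex.mul_conj]
  -- the vanishing condition as a real linear-algebra condition
  have hmulVec : ∀ i, (Bmat lam mu).mulVec w i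
      = ∑ j, (∏ k ∈ univ.erase j, (mu i - lam k)) * w j := by
    intro i
    rw [Matrix.mulVec, dotProduct]
    rfl
  have hvan : (∀ i, H.charpoly.eval (μC i) = 0)
      ↔ ∀ i, Vvec lam mu i = α/2 * (Bmat lam mu).mulVec w i := by
    constructor
    · intro h i
      have := h i
      rw [hkey (mu i), Complex.ofReal_eq_zero, sub_eq_zero] at this
      rw [Vvec, this, hmulVec i]
      rw [Finset.mul_sum, Finset.mul_sum]
      congr 1
      funext j
      ring
    · intro h i
      rw [hkey (mu i), Complex.ofReal_eq_zero, sub_eq_zero]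
      have := h i
      rw [Vvec] at this
      rw [this, hmulVec i, Finset.mul_sum, Finset.mul_sum]
      congr 1
      funext j
      ring
  have hlin : (∀ i, Vvec lam mu i = α/2 * (Bmat lam mu).mulVec w i)
      ↔ w = (2 / α) • (Bmat lam mu)⁻¹.mulVec (Vvec lam mu) := by
    constructor
    · intro h
      have hBV : (Bmat lam mu).mulVec w = (2/α) • Vvec lam mu := by
        funext i
        rw [Pi.smul_apply, smul_eq_mul, h i]
        field_simp
      have := congrArg (fun v => (Bmat lam mu)⁻¹.mulVec v) hBV
      simp only [Matrix.mulVec_mulVec] at this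
      rw [Matrix.nonsing_inv_mul _ hB, Matrix.one_mulVec] at this
      rw [this, Matrix.mulVec_smul]
    · intro h
      intro i
      have hBV : (Bmat lam mu).mulVec w = (2/α) • Vvec lam mu := by
        rw [h, Matrix.mulVec_smul, Matrix.mulVec_mulVec, Matrix.mul_nonsing_inv _ hB,
          Matrix.one_mulVec]
      rw [hBV, Pi.smul_apply, smul_eq_mul]
      field_simp
  -- reduction of the unitary conjugation equation
  have hred : ∀ A : Matrix.unitaryGroup (Fin n) ℂ,
      (Complex.I • Matrix.diagonal lamC + ((Complex.I * (α : ℂ)) / 2) • outerMat z z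
        = (A : Matrix (Fin n) (Fin n) ℂ) * (Complex.I • Matrix.diagonal μC)
            * star (A : Matrix (Fin n) (Fin n) ℂ))
      ↔ H = (A : Matrix (Fin n) (Fin n) ℂ) * Matrix.diagonal μC
            * star (A : Matrix (Fin n) (Fin n) ℂ) := by
    intro A
    have h1 : ((Complex.I * (α : ℂ)) / 2) • outerMat z z
        = Complex.I • (((α : ℂ)/2) • outerMat z z) := by
      rw [smul_smul]
      congr 1
      ring
    have h2 : (A : Matrix (Fin n) (Fin n) ℂ) * (Complex.I • Matrix.diagonal μC)
        * star (A : Matrix (Fin n) (Fin n) ℂ)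
        = Complex.I • ((A : Matrix (Fin n) (Fin n) ℂ) * Matrix.diagonal μC
            * star (A : Matrix (Fin n) (Fin n) ℂ)) := by
      rw [Matrix.mul_smul, Matrix.smul_mul]
    rw [h1, h2, ← smul_add, hH]
    constructor
    · intro h
      exact smul_right_injective _ Complex.I_ne_zero h
    · intro h
      rw [h]
  -- main chain
  constructor
  · intro ⟨A, hA⟩
    rw [hred A] at hA
    rw [← hlin, ← hvan]
    intro i
    have hcp : H.charpoly = ∏ k, (X - C (μC k)) := by
      rw [hA, charpoly_unitary_conj A, charpoly_diagonal']
    rw [hcp, eval_prod]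
    apply Finset.prod_eq_zero (Finset.mem_univ i)
    simp
  · intro h
    rw [← hlin, ← hvan] at h
    have hcp : H.charpoly = ∏ k, (X - C (μC k)) := by
      apply monic_eq_prod _ _ (Matrix.charpoly_monic H)
        (by rw [Matrix.charpoly_natDegree_eq_dim, Fintype.card_fin]) hμCinj h
    obtain ⟨A, hA⟩ := hermitian_conj_diag_of_charpoly H hHherm μC hμCinj hcp
    exact ⟨A, (hred A).mpr hA⟩
end
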